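/- The number of labeled k-ary trees with n nodes is ∏_{j=0}^{n−1} ((k−1)j + 1). -/

import Mathlib

/-- `k`-ary trees: each internal node carries a label and a list of children
(ordered left to right, with `leaf` marking absent subtrees). -/
inductive KTree where
  | leaf : KTree
  | node : ℕ → List KTree → KTree

/-- The list of labels of a `k`-ary tree. -/
def KTree.labels : KTree → List ℕ
  | .leaf => []
  | .node x c => x :: (c.attach.map (fun t => KTree.labels t.1)).flatten
decreasing_by
  have := List.sizeOf_lt_of_mem t.2
  simp only [KTree.node.sizeOf_spec]
  omega

/-- Every internal node has exactly `k` (possibly absent) children,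
i.e. each node has at most `k` children, distinguished by positions `1,...,k`. -/
inductive KTree.Arity (k : ℕ) : KTree → Prop
  | leaf : Arity k .leaf
  | node (x : ℕ) (c : List KTree) : c.length = k → (∀ t ∈ c, Arity k t) → Arity k (.node x c)

/-- Labels increase along every root-to-leaf path. -/
inductive KTree.Incr : KTree → Prop
  | leaf : Incr .leaf
  | node (x : ℕ) (c : List KTree) :
      (∀ t ∈ c, ∀ y ∈ KTree.labels t, x < y) →
      (∀ t ∈ c, Incr t) → Incr (.node x c)

/-- A labeled `k`-ary tree with `n` nodes: labels are exactly `{1,...,n}`,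
increasing along root-to-leaf paths. -/
def IsLabeledKTree (k n : ℕ) (t : KTree) : Prop :=
  t.Arity k ∧ t.labels.Perm (List.range' 1 n) ∧ t.Incr


namespace KTree

def labelsL (l : List KTree) : List ℕ := (l.map KTree.labels).flatten

@[simp] theorem labelsL_nil : labelsL [] = [] := rfl
@[simp] theorem labelsL_cons (t : KTree) (ts : List KTree) :
    labelsL (t :: ts) = t.labels ++ labelsL ts := rfl

@[simp] theorem labels_leaf : KTree.labels .leaf = [] := by rw [KTree.labels]

@[simp] theorem labels_node (x : ℕ) (c : List KTree) :
    (KTree.node x c).labels = x :: labelsL c := by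
  rw [KTree.labels, labelsL]
  congr 1
  rw [List.map_attach_eq_pmap]
  simp

mutual
def nleaves : KTree → ℕ
  | .leaf => 1
  | .node _ c => nleavesL c
def nleavesL : List KTree → ℕ
  | [] => 0
  | t :: ts => nleaves t + nleavesL ts
end

mutual
def ins (k m : ℕ) : KTree → ℕ → KTree
  | .leaf, _ => .node m (List.replicate k .leaf)
  | .node x c, i => .node x (insL k m c i)
def insL (k m : ℕ) : List KTree → ℕ → List KTree
  | [], _ => []
  | t :: ts, i => if i < t.nleaves then ins k m t i :: ts else t :: insL k m ts (i - t.nleaves)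
end

mutual
def del (m : ℕ) : KTree → KTree
  | .leaf => .leaf
  | .node x c => if x = m then .leaf else .node x (delL m c)
def delL (m : ℕ) : List KTree → List KTree
  | [] => []
  | t :: ts => del m t :: delL m ts
end

mutual
def pos (m : ℕ) : KTree → ℕ
  | .leaf => 0
  | .node x c => if x = m then 0 else posL m c
def posL (m : ℕ) : List KTree → ℕ
  | [] => 0
  | t :: ts => if m ∈ t.labels then pos m t else (del m t).nleaves + posL m ts
end

@[simp] theorem nleaves_leaf : nleaves .leaf = 1 := by rw [nleaves]
@[simp] theorem nleaves_node (x : ℕ) (c : List KTree) : nleaves (.node x c) = nleavesL c := by rw [nleaves]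
@[simp] theorem nleavesL_nil : nleavesL [] = 0 := by rw [nleavesL]
@[simp] theorem nleavesL_cons (t : KTree) (ts : List KTree) :
    nleavesL (t :: ts) = nleaves t + nleavesL ts := by rw [nleavesL]

@[simp] theorem ins_leaf (k m i : ℕ) : ins k m .leaf i = .node m (List.replicate k .leaf) := by rw [ins]
@[simp] theorem ins_node (k m x i : ℕ) (c : List KTree) :
    ins k m (.node x c) i = .node x (insL k m c i) := by rw [ins]
@[simp] theorem insL_nil (k m i : ℕ) : insL k m [] i = [] := by rw [insL]
theorem insL_cons (k m i : ℕ) (t : KTree) (ts : List KTree) :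
    insL k m (t :: ts) i =
      if i < t.nleaves then ins k m t i :: ts else t :: insL k m ts (i - t.nleaves) := by
  rw [insL]

@[simp] theorem del_leaf (m : ℕ) : del m .leaf = .leaf := by rw [del]
theorem del_node (m x : ℕ) (c : List KTree) :
    del m (.node x c) = if x = m then .leaf else .node x (delL m c) := by rw [del]
@[simp] theorem delL_nil (m : ℕ) : delL m [] = [] := by rw [delL]
@[simp] theorem delL_cons (m : ℕ) (t : KTree) (ts : List KTree) :
    delL m (t :: ts) = del m t :: delL m ts := by rw [delL]

@[simp] theorem pos_leaf (m : ℕ) : pos m .leaf = 0 := by rw [pos]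
theorem pos_node (m x : ℕ) (c : List KTree) :
    pos m (.node x c) = if x = m then 0 else posL m c := by rw [pos]
@[simp] theorem posL_nil (m : ℕ) : posL m [] = 0 := by rw [posL]
theorem posL_cons (m : ℕ) (t : KTree) (ts : List KTree) :
    posL m (t :: ts) = if m ∈ t.labels then pos m t else (del m t).nleaves + posL m ts := by
  rw [posL]

theorem rec' {P : KTree → Prop} (hleaf : P .leaf)
    (hnode : ∀ x c, (∀ t ∈ c, P t) → P (.node x c)) : ∀ t, P t
  | .leaf => hleaf
  | .node x c => hnode x c (fun t _ => rec' hleaf hnode t)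
decreasing_by
  have := List.sizeOf_lt_of_mem (by assumption : t ∈ c)
  simp only [KTree.node.sizeOf_spec]
  omega

theorem labels_eq_nil : ∀ {t : KTree}, t.labels = [] → t = .leaf
  | .leaf, _ => rfl
  | .node x c, h => by rw [labels_node] at h; cases h

@[simp] theorem length_insL (k m : ℕ) (ts : List KTree) (i : ℕ) :
    (insL k m ts i).length = ts.length := by
  induction ts generalizing i with
  | nil => simp
  | cons t ts ih => rw [insL_cons]; split <;> simp [ih]

theorem mem_insL {k m : ℕ} {ts : List KTree} {i : ℕ} {s : KTree}
    (hs : s ∈ insL k m ts i) : s ∈ ts ∨ ∃ t ∈ ts, ∃ j, s = ins k m t j := by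
  induction ts generalizing i with
  | nil => simp at hs
  | cons t ts ih =>
    rw [insL_cons] at hs
    split at hs
    · rcases List.mem_cons.1 hs with h | h
      · exact .inr ⟨t, by simp, _, h⟩
      · exact .inl (by simp [h])
    · rcases List.mem_cons.1 hs with h | h
      · exact .inl (by simp [h])
      · rcases ih h with h | ⟨t', ht', j, hj⟩
        · exact .inl (by simp [h])
        · exact .inr ⟨t', by simp [ht'], j, hj⟩

theorem ins_arity {k : ℕ} (m : ℕ) : ∀ t : KTree, Arity k t → ∀ i, Arity k (ins k m t i) := by
  refine rec' (P := fun t => Arity k t → ∀ i, Arity k (ins k m t i)) (fun _ _ => ?_)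
    (fun x c IH ha i => ?_)
  · rw [ins_leaf]
    exact .node _ _ List.length_replicate
      (fun t ht => by rw [List.eq_of_mem_replicate ht]; exact .leaf)
  · cases ha with
    | node _ _ hlen hmem =>
      rw [ins_node]
      refine .node _ _ (by simp [hlen]) (fun s hs => ?_)
      rcases mem_insL hs with h | ⟨t, ht, j, rfl⟩
      · exact hmem s h
      · exact IH t ht (hmem t ht) j

theorem labelsL_insL_subset {k m : ℕ} {ts : List KTree}
    (H : ∀ t ∈ ts, ∀ i, ∀ y ∈ (ins k m t i).labels, y = m ∨ y ∈ t.labels) :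
    ∀ i, ∀ y ∈ labelsL (insL k m ts i), y = m ∨ y ∈ labelsL ts := by
  induction ts with
  | nil => simp
  | cons t ts ih =>
    intro i y hy
    rw [insL_cons] at hy
    split at hy
    · rw [labelsL_cons, List.mem_append] at hy
      rcases hy with hy | hy
      · rcases H t (by simp) i y hy with h | h
        · exact .inl h
        · exact .inr (by simp [h])
      · exact .inr (by simp [hy])
    · rw [labelsL_cons, List.mem_append] at hy
      rcases hy with hy | hy
      · exact .inr (by simp [hy])
      · rcases ih (fun t ht => H t (by simp [ht])) _ y hy with h | h
        · exact .inl h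
        · exact .inr (by simp [h])

theorem labels_ins_subset {k : ℕ} (m : ℕ) :
    ∀ t : KTree, ∀ i, ∀ y ∈ (ins k m t i).labels, y = m ∨ y ∈ t.labels := by
  refine rec' (P := fun t => ∀ i, ∀ y ∈ (ins k m t i).labels, y = m ∨ y ∈ t.labels)
    (fun i y hy => ?_) (fun x c IH i y hy => ?_)
  · rw [ins_leaf, labels_node] at hy
    rcases List.mem_cons.1 hy with h | h
    · exact .inl h
    · exfalso
      simp only [labelsL, List.mem_flatten, List.mem_map] at h
      rcases h with ⟨l, ⟨t, ht, rfl⟩, hl⟩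
      rw [List.eq_of_mem_replicate ht, labels_leaf] at hl
      exact absurd hl List.not_mem_nil
  · rw [ins_node, labels_node] at hy
    rcases List.mem_cons.1 hy with h | h
    · exact .inr (by simp [h])
    · rcases labelsL_insL_subset IH i y h with h | h
      · exact .inl h
      · exact .inr (by simp [h])

theorem labelsL_insL_perm {k m : ℕ} {ts : List KTree}
    (H : ∀ t ∈ ts, ∀ i, i < nleaves t → (ins k m t i).labels.Perm (m :: t.labels)) :
    ∀ i, i < nleavesL ts → (labelsL (insL k m ts i)).Perm (m :: labelsL ts) := by
  induction ts with
  | nil => simp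
  | cons t ts ih =>
    intro i hi
    rw [insL_cons]
    rw [nleavesL_cons] at hi
    split
    · simp only [labelsL_cons]
      exact ((H t (by simp) i (by assumption)).append_right _)
    · rename_i hlt
      simp only [labelsL_cons]
      have h2 : i - nleaves t < nleavesL ts := by omega
      exact (((ih (fun t ht => H t (by simp [ht])) _ h2).append_left _).trans
        List.perm_middle)

theorem labels_ins_perm {k : ℕ} (m : ℕ) :
    ∀ t : KTree, ∀ i, i < nleaves t → (ins k m t i).labels.Perm (m :: t.labels) := by
  refine rec' (P := fun t => ∀ i, i < nleaves t → (ins k m t i).labels.Perm (m :: t.labels))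
    (fun i _ => ?_) (fun x c IH i hi => ?_)
  · rw [ins_leaf, labels_node, labels_leaf]
    have : labelsL (List.replicate k .leaf) = [] := by
      simp only [labelsL, List.flatten_eq_nil_iff, List.mem_map]
      rintro l ⟨t, ht, rfl⟩
      rw [List.eq_of_mem_replicate ht, labels_leaf]
    rw [this]
  · rw [ins_node, labels_node, labels_node]
    rw [nleaves_node] at hi
    exact ((labelsL_insL_perm IH i hi).cons x).trans (List.Perm.swap _ _ _)

end KTree
namespace KTree

theorem mem_labelsL {y : ℕ} {t : KTree} {ts : List KTree} (ht : t ∈ ts)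
    (hy : y ∈ t.labels) : y ∈ labelsL ts := by
  rw [labelsL, List.mem_flatten]
  exact ⟨t.labels, List.mem_map.2 ⟨t, ht, rfl⟩, hy⟩

theorem ins_incr {k m : ℕ} :
    ∀ t : KTree, Incr t → (∀ y ∈ t.labels, y < m) → ∀ i, Incr (ins k m t i) := by
  refine rec' (P := fun t => Incr t → (∀ y ∈ t.labels, y < m) → ∀ i, Incr (ins k m t i))
    (fun _ _ _ => ?_) (fun x c IH hincr hlt i => ?_)
  · rw [ins_leaf]
    refine .node _ _ (fun t ht y hy => ?_) (fun t ht => ?_)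
    · rw [List.eq_of_mem_replicate ht, labels_leaf] at hy
      exact absurd hy List.not_mem_nil
    · rw [List.eq_of_mem_replicate ht]; exact .leaf
  · cases hincr with
    | node _ _ h1 h2 =>
      rw [ins_node]
      have hxm : x < m := hlt x (by simp)
      refine .node _ _ (fun s hs y hy => ?_) (fun s hs => ?_)
      · rcases mem_insL hs with h | ⟨t, ht, j, rfl⟩
        · exact h1 s h y hy
        · rcases labels_ins_subset m t j y hy with rfl | h
          · exact hxm
          · exact h1 t ht y h
      · rcases mem_insL hs with h | ⟨t, ht, j, rfl⟩
        · exact h2 s h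
        · exact IH t ht (h2 t ht)
            (fun y hy => hlt y (by rw [labels_node]; exact List.mem_cons_of_mem _ (mem_labelsL ht hy))) j

theorem delL_eq_self' {m : ℕ} {ts : List KTree}
    (H : ∀ t ∈ ts, m ∉ t.labels → del m t = t) (h : m ∉ labelsL ts) : delL m ts = ts := by
  induction ts with
  | nil => simp
  | cons t ts ih =>
    rw [labelsL_cons, List.mem_append] at h
    push_neg at h
    rw [delL_cons, H t (by simp) h.1, ih (fun t ht => H t (by simp [ht])) h.2]

theorem del_eq_self {m : ℕ} : ∀ t : KTree, m ∉ t.labels → del m t = t := by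
  refine rec' (P := fun t => m ∉ t.labels → del m t = t) (fun _ => by simp)
    (fun x c IH h => ?_)
  rw [labels_node, List.mem_cons] at h
  push_neg at h
  rw [del_node, if_neg (Ne.symm h.1), delL_eq_self' IH h.2]

theorem delL_eq_self {m : ℕ} {ts : List KTree} (h : m ∉ labelsL ts) : delL m ts = ts :=
  delL_eq_self' (fun t _ => del_eq_self t) h

theorem delL_insL {k m : ℕ} {ts : List KTree}
    (H : ∀ t ∈ ts, m ∉ t.labels → ∀ i, del m (ins k m t i) = t)
    (h : m ∉ labelsL ts) : ∀ i, delL m (insL k m ts i) = ts := by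
  induction ts with
  | nil => simp
  | cons t ts ih =>
    intro i
    rw [labelsL_cons, List.mem_append] at h
    push_neg at h
    rw [insL_cons]
    split
    · rw [delL_cons, H t (by simp) h.1 i, delL_eq_self h.2]
    · rw [delL_cons, del_eq_self t h.1, ih (fun t ht => H t (by simp [ht])) h.2]

theorem del_ins {k m : ℕ} : ∀ t : KTree, m ∉ t.labels → ∀ i, del m (ins k m t i) = t := by
  refine rec' (P := fun t => m ∉ t.labels → ∀ i, del m (ins k m t i) = t)
    (fun _ i => ?_) (fun x c IH h i => ?_)
  · rw [ins_leaf, del_node, if_pos rfl]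
  · rw [labels_node, List.mem_cons] at h
    push_neg at h
    rw [ins_node, del_node, if_neg (Ne.symm h.1)]
    congr 1
    exact delL_insL IH h.2 i

@[simp] theorem length_delL (m : ℕ) (ts : List KTree) : (delL m ts).length = ts.length := by
  induction ts with
  | nil => simp
  | cons t ts ih => rw [delL_cons]; simp [ih]

theorem mem_delL {m : ℕ} {ts : List KTree} {s : KTree} (hs : s ∈ delL m ts) :
    ∃ t ∈ ts, s = del m t := by
  induction ts with
  | nil => simp at hs
  | cons t ts ih =>
    rw [delL_cons] at hs
    rcases List.mem_cons.1 hs with h | h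
    · exact ⟨t, by simp, h⟩
    · rcases ih h with ⟨t', ht', rfl⟩
      exact ⟨t', by simp [ht'], rfl⟩

theorem del_arity {k : ℕ} (m : ℕ) : ∀ t : KTree, Arity k t → Arity k (del m t) := by
  refine rec' (P := fun t => Arity k t → Arity k (del m t)) (fun _ => by simpa using Arity.leaf)
    (fun x c IH ha => ?_)
  cases ha with
  | node _ _ hlen hmem =>
    rw [del_node]
    split
    · exact .leaf
    · refine .node _ _ (by simp [hlen]) (fun s hs => ?_)
      rcases mem_delL hs with ⟨t, ht, rfl⟩
      exact IH t ht (hmem t ht)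

theorem labels_del_subset {m : ℕ} : ∀ t : KTree, ∀ y ∈ (del m t).labels, y ∈ t.labels := by
  refine rec' (P := fun t => ∀ y ∈ (del m t).labels, y ∈ t.labels) (fun y hy => by simpa using hy)
    (fun x c IH y hy => ?_)
  rw [del_node] at hy
  split at hy
  · simp at hy
  · rw [labels_node] at hy ⊢
    rcases List.mem_cons.1 hy with h | h
    · simp [h]
    · refine List.mem_cons_of_mem _ ?_
      clear hy
      induction c with
      | nil => simpa using h
      | cons t ts ih =>
        rw [delL_cons, labelsL_cons, List.mem_append] at h
        rcases h with h | h
        · exact List.mem_append_left _ (IH t (by simp) y h)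
        · exact List.mem_append_right _ (ih (fun t ht => IH t (by simp [ht])) h)

theorem del_incr {m : ℕ} : ∀ t : KTree, Incr t → Incr (del m t) := by
  refine rec' (P := fun t => Incr t → Incr (del m t)) (fun _ => by simpa using Incr.leaf)
    (fun x c IH hi => ?_)
  cases hi with
  | node _ _ h1 h2 =>
    rw [del_node]
    split
    · exact .leaf
    · refine .node _ _ (fun s hs y hy => ?_) (fun s hs => ?_)
      · rcases mem_delL hs with ⟨t, ht, rfl⟩
        exact h1 t ht y (labels_del_subset t y hy)
      · rcases mem_delL hs with ⟨t, ht, rfl⟩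
        exact IH t ht (h2 t ht)

theorem labelsL_delL {m : ℕ} {ts : List KTree}
    (H : ∀ t ∈ ts, Incr t → (∀ y ∈ t.labels, y ≤ m) →
      (del m t).labels = t.labels.filter (· ≠ m))
    (h2 : ∀ t ∈ ts, Incr t) (hle : ∀ y ∈ labelsL ts, y ≤ m) :
    labelsL (delL m ts) = (labelsL ts).filter (· ≠ m) := by
  induction ts with
  | nil => simp
  | cons t ts ih =>
    rw [delL_cons, labelsL_cons, labelsL_cons, List.filter_append,
      H t (by simp) (h2 t (by simp))
        (fun y hy => hle y (by rw [labelsL_cons]; exact List.mem_append_left _ hy)),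
      ih (fun t ht => H t (by simp [ht])) (fun t ht => h2 t (by simp [ht]))
        (fun y hy => hle y (by rw [labelsL_cons]; exact List.mem_append_right _ hy))]

theorem labels_del_eq {m : ℕ} :
    ∀ t : KTree, Incr t → (∀ y ∈ t.labels, y ≤ m) →
      (del m t).labels = t.labels.filter (· ≠ m) := by
  refine rec' (P := fun t => Incr t → (∀ y ∈ t.labels, y ≤ m) →
      (del m t).labels = t.labels.filter (· ≠ m)) (fun _ _ => by simp)
    (fun x c IH hi hle => ?_)
  cases hi with
  | node _ _ h1 h2 =>
    rw [del_node]
    split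
    · rename_i hx
      subst hx
      have hnil : labelsL c = [] := by
        rw [List.eq_nil_iff_forall_not_mem]
        intro y hy
        rw [labelsL, List.mem_flatten] at hy
        rcases hy with ⟨l, hl, hyl⟩
        rcases List.mem_map.1 hl with ⟨t, ht, rfl⟩
        have := h1 t ht y hyl
        have := hle y (by rw [labels_node]; exact List.mem_cons_of_mem _ (mem_labelsL ht hyl))
        omega
      rw [labels_leaf, labels_node, hnil]
      simp
    · rename_i hx
      rw [labels_node, labels_node]
      have hstep : labelsL (delL m c) = (labelsL c).filter (· ≠ m) :=
        labelsL_delL IH h2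
          (fun y hy => hle y (by rw [labels_node]; exact List.mem_cons_of_mem _ hy))
      rw [hstep, List.filter_cons, if_pos (by simpa using hx)]

end KTree
namespace KTree

theorem posL_lt {m : ℕ} {ts : List KTree}
    (H : ∀ t ∈ ts, m ∈ t.labels → pos m t < nleaves (del m t))
    (h : m ∈ labelsL ts) : posL m ts < nleavesL (delL m ts) := by
  induction ts with
  | nil => simp at h
  | cons t ts ih =>
    rw [posL_cons, delL_cons, nleavesL_cons]
    split
    · have := H t (by simp) (by assumption)
      omega
    · rw [labelsL_cons, List.mem_append] at h
      rcases h with h | h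
      · exact absurd h (by assumption)
      · have := ih (fun t ht => H t (by simp [ht])) h
        omega

theorem pos_lt {m : ℕ} : ∀ t : KTree, m ∈ t.labels → pos m t < nleaves (del m t) := by
  refine rec' (P := fun t => m ∈ t.labels → pos m t < nleaves (del m t))
    (fun h => by simp at h) (fun x c IH h => ?_)
  rw [pos_node, del_node]
  split
  · simp
  · rename_i hx
    rw [labels_node, List.mem_cons] at h
    rcases h with rfl | h
    · exact absurd rfl hx
    · rw [nleaves_node]
      exact posL_lt IH h

theorem posL_insL {k m : ℕ} {ts : List KTree}
    (H : ∀ t ∈ ts, m ∉ t.labels → ∀ i, i < nleaves t → pos m (ins k m t i) = i)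
    (h : m ∉ labelsL ts) : ∀ i, i < nleavesL ts → posL m (insL k m ts i) = i := by
  induction ts with
  | nil => simp
  | cons t ts ih =>
    intro i hi
    rw [labelsL_cons, List.mem_append] at h
    push_neg at h
    rw [nleavesL_cons] at hi
    rw [insL_cons]
    split
    · rename_i hlt
      rw [posL_cons, if_pos (((labels_ins_perm m t i hlt).mem_iff).2 (by simp))]
      exact H t (by simp) h.1 i hlt
    · rename_i hlt
      rw [posL_cons, if_neg h.1, del_eq_self t h.1,
        ih (fun t ht => H t (by simp [ht])) h.2 _ (by omega)]
      omega

theorem pos_ins {k m : ℕ} :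
    ∀ t : KTree, m ∉ t.labels → ∀ i, i < nleaves t → pos m (ins k m t i) = i := by
  refine rec' (P := fun t => m ∉ t.labels → ∀ i, i < nleaves t → pos m (ins k m t i) = i)
    (fun _ i hi => ?_) (fun x c IH h i hi => ?_)
  · rw [nleaves_leaf] at hi
    rw [ins_leaf, pos_node, if_pos rfl]
    omega
  · rw [labels_node, List.mem_cons] at h
    push_neg at h
    rw [ins_node, pos_node, if_neg (Ne.symm h.1)]
    rw [nleaves_node] at hi
    exact posL_insL IH h.2 i hi

theorem insL_delL_posL {k m : ℕ} {ts : List KTree}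
    (H : ∀ t ∈ ts, Arity k t → Incr t → t.labels.Nodup → (∀ y ∈ t.labels, y ≤ m) →
      m ∈ t.labels → ins k m (del m t) (pos m t) = t)
    (ha : ∀ t ∈ ts, Arity k t) (hincr : ∀ t ∈ ts, Incr t)
    (hnd : (labelsL ts).Nodup) (hle : ∀ y ∈ labelsL ts, y ≤ m)
    (hm : m ∈ labelsL ts) : insL k m (delL m ts) (posL m ts) = ts := by
  induction ts with
  | nil => simp at hm
  | cons t ts ih =>
    rw [labelsL_cons] at hnd hle hm
    rw [delL_cons, posL_cons]
    have hdisj := (List.nodup_append.1 hnd).2.2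
    split
    · rename_i hmt
      rw [insL_cons, if_pos (pos_lt t hmt),
        H t (by simp) (ha t (by simp)) (hincr t (by simp)) (List.nodup_append.1 hnd).1
          (fun y hy => hle y (List.mem_append_left _ hy)) hmt]
      congr 1
      exact delL_eq_self (fun hmem => hdisj _ hmt _ hmem rfl)
    · rename_i hmt
      have hmts : m ∈ labelsL ts := by
        rcases List.mem_append.1 hm with h | h
        · exact absurd h hmt
        · exact h
      rw [del_eq_self t hmt, insL_cons, if_neg (by omega)]
      congr 1
      rw [Nat.add_sub_cancel_left]
      exact ih (fun t ht => H t (by simp [ht])) (fun t ht => ha t (by simp [ht]))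
        (fun t ht => hincr t (by simp [ht])) (List.nodup_append.1 hnd).2.1
        (fun y hy => hle y (List.mem_append_right _ hy)) hmts

theorem ins_del_pos {k m : ℕ} :
    ∀ t : KTree, Arity k t → Incr t → t.labels.Nodup → (∀ y ∈ t.labels, y ≤ m) →
      m ∈ t.labels → ins k m (del m t) (pos m t) = t := by
  refine rec' (P := fun t => Arity k t → Incr t → t.labels.Nodup →
      (∀ y ∈ t.labels, y ≤ m) → m ∈ t.labels → ins k m (del m t) (pos m t) = t)
    (fun _ _ _ _ hm => by simp at hm) (fun x c IH ha hincr hnd hle hm => ?_)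
  cases ha with
  | node _ _ hlen hamem =>
  cases hincr with
  | node _ _ h1 h2 =>
    rw [del_node, pos_node]
    by_cases hx : x = m
    · subst hx
      rw [if_pos rfl, if_pos rfl, ins_leaf]
      congr 1
      have : ∀ t ∈ c, t = KTree.leaf := by
        intro t ht
        refine labels_eq_nil (List.eq_nil_iff_forall_not_mem.2 (fun y hy => ?_))
        have := h1 t ht y hy
        have := hle y (by rw [labels_node]; exact List.mem_cons_of_mem _ (mem_labelsL ht hy))
        omega
      exact (List.eq_replicate_iff.2 ⟨hlen, this⟩).symm
    · rw [if_neg hx, if_neg hx, ins_node]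
      congr 1
      rw [labels_node] at hnd hle hm
      rcases List.mem_cons.1 hm with rfl | hm'
      · exact absurd rfl hx
      · exact insL_delL_posL IH hamem h2 (List.nodup_cons.1 hnd).2
          (fun y hy => hle y (List.mem_cons_of_mem _ hy)) hm'

theorem nleavesL_arity {k : ℕ} {ts : List KTree}
    (H : ∀ t ∈ ts, Arity k t → nleaves t + t.labels.length = k * t.labels.length + 1)
    (ha : ∀ t ∈ ts, Arity k t) :
    nleavesL ts + (labelsL ts).length = k * (labelsL ts).length + ts.length := by
  induction ts with
  | nil => simp
  | cons t ts ih =>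
    have h1 := H t (by simp) (ha t (by simp))
    have h2 := ih (fun t ht => H t (by simp [ht])) (fun t ht => ha t (by simp [ht]))
    rw [nleavesL_cons, labelsL_cons, List.length_append, List.length_cons, Nat.mul_add]
    omega

theorem nleaves_arity {k : ℕ} :
    ∀ t : KTree, Arity k t → nleaves t + t.labels.length = k * t.labels.length + 1 := by
  refine rec' (P := fun t => Arity k t →
      nleaves t + t.labels.length = k * t.labels.length + 1) (fun _ => by simp)
    (fun x c IH ha => ?_)
  cases ha with
  | node _ _ hlen hmem =>
    have := nleavesL_arity IH hmem
    rw [labels_node, nleaves_node, List.length_cons, Nat.mul_add, Nat.mul_one]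
    omega

end KTree
open KTree in
theorem labeled_mem_le {k n : ℕ} {t : KTree} (h : IsLabeledKTree k n t) :
    ∀ y ∈ t.labels, 1 ≤ y ∧ y ≤ n := by
  intro y hy
  have := h.2.1.mem_iff.1 hy
  rw [List.mem_range'_1] at this
  omega

open KTree in
theorem nleaves_of_labeled {k n : ℕ} {t : KTree} (hk : 1 ≤ k)
    (h : IsLabeledKTree k n t) : t.nleaves = (k - 1) * n + 1 := by
  obtain ⟨ha, hp, _⟩ := h
  have hl : t.labels.length = n := by rw [hp.length_eq, List.length_range']
  have h2 := nleaves_arity t ha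
  rw [hl] at h2
  obtain ⟨j, rfl⟩ : ∃ j, k = j + 1 := ⟨k - 1, by omega⟩
  simp only [Nat.add_sub_cancel]
  rw [Nat.succ_mul] at h2
  omega

open KTree in
theorem del_labeled {k n : ℕ} {t : KTree} (h : IsLabeledKTree k (n + 1) t) :
    IsLabeledKTree k n (del (n + 1) t) := by
  obtain ⟨ha, hp, hi⟩ := h
  refine ⟨del_arity _ t ha, ?_, del_incr t hi⟩
  have hle : ∀ y ∈ t.labels, y ≤ n + 1 := fun y hy =>
    (labeled_mem_le ⟨ha, hp, hi⟩ y hy).2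
  rw [labels_del_eq t hi hle]
  have hcat : List.range' 1 (n + 1) = List.range' 1 n ++ [n + 1] := by
    rw [List.range'_concat]; congr 1; simp [Nat.add_comm]
  have := hp.filter (fun y => y ≠ n + 1)
  rw [hcat, List.filter_append] at this
  have e1 : (List.range' 1 n).filter (fun y => y ≠ n + 1) = List.range' 1 n := by
    refine List.filter_eq_self.2 (fun y hy => ?_)
    rw [List.mem_range'_1] at hy
    simp only [ne_eq, decide_eq_true_eq]
    omega
  have e2 : List.filter (fun y => y ≠ n + 1) [n + 1] = [] := by
    simp
  rw [e1, e2, List.append_nil] at this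
  exact this

open KTree in
theorem pos_labeled_lt {k n : ℕ} {t : KTree} (hk : 1 ≤ k)
    (h : IsLabeledKTree k (n + 1) t) : pos (n + 1) t < (k - 1) * n + 1 := by
  have hm : (n + 1) ∈ t.labels := h.2.1.mem_iff.2 (by rw [List.mem_range'_1]; omega)
  have := pos_lt t hm
  have h2 : (del (n + 1) t).nleaves = (k - 1) * n + 1 :=
    nleaves_of_labeled hk (del_labeled h)
  omega

open KTree in
theorem ins_labeled {k n i : ℕ} {t : KTree} (hk : 1 ≤ k)
    (h : IsLabeledKTree k n t) (hi : i < (k - 1) * n + 1) :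
    IsLabeledKTree k (n + 1) (ins k (n + 1) t i) := by
  obtain ⟨ha, hp, hincr⟩ := h
  have hlt : ∀ y ∈ t.labels, y < n + 1 := fun y hy => by
    have := labeled_mem_le ⟨ha, hp, hincr⟩ y hy; omega
  have hnl : i < t.nleaves := by rw [nleaves_of_labeled hk ⟨ha, hp, hincr⟩]; omega
  refine ⟨ins_arity _ t ha i, ?_, ins_incr t hincr hlt i⟩
  refine (labels_ins_perm _ t i hnl).trans ?_
  refine (hp.cons (n + 1)).trans ?_
  have hcat : List.range' 1 (n + 1) = List.range' 1 n ++ [n + 1] := by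
    rw [List.range'_concat]; congr 1; simp [Nat.add_comm]
  rw [hcat]
  exact (List.perm_append_singleton _ _).symm

open KTree in
theorem left_inv_labeled {k n : ℕ} {t : KTree} (h : IsLabeledKTree k (n + 1) t) :
    ins k (n + 1) (del (n + 1) t) (pos (n + 1) t) = t := by
  obtain ⟨ha, hp, hincr⟩ := h
  refine ins_del_pos t ha hincr ?_ (fun y hy => (labeled_mem_le ⟨ha, hp, hincr⟩ y hy).2) ?_
  · exact hp.nodup_iff.2 (List.nodup_range' ..)
  · exact hp.mem_iff.2 (by rw [List.mem_range'_1]; omega)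

open KTree in
theorem right_inv_labeled {k n i : ℕ} {t : KTree} (hk : 1 ≤ k)
    (h : IsLabeledKTree k n t) (hi : i < (k - 1) * n + 1) :
    del (n + 1) (ins k (n + 1) t i) = t ∧ pos (n + 1) (ins k (n + 1) t i) = i := by
  have hnm : (n + 1) ∉ t.labels := fun hmem => by
    have := labeled_mem_le h _ hmem; omega
  have hnl : i < t.nleaves := by rw [nleaves_of_labeled hk h]; omega
  exact ⟨del_ins t hnm i, pos_ins t hnm i hnl⟩

theorem step_card (k n : ℕ) (hk : 1 ≤ k) :
    Nat.card {t : KTree // IsLabeledKTree k (n + 1) t}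
      = Nat.card {t : KTree // IsLabeledKTree k n t} * ((k - 1) * n + 1) := by
  have e : {t : KTree // IsLabeledKTree k (n + 1) t} ≃
      {t : KTree // IsLabeledKTree k n t} × Fin ((k - 1) * n + 1) :=
    { toFun := fun t => (⟨KTree.del (n + 1) t.1, del_labeled t.2⟩,
        ⟨KTree.pos (n + 1) t.1, pos_labeled_lt hk t.2⟩)
      invFun := fun p => ⟨KTree.ins k (n + 1) p.1.1 p.2.1, ins_labeled hk p.1.2 p.2.2⟩
      left_inv := fun t => Subtype.ext (left_inv_labeled t.2)
      right_inv := fun p => by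
        obtain ⟨hd, hp⟩ := right_inv_labeled hk p.1.2 p.2.2
        exact Prod.ext (Subtype.ext hd) (Fin.ext hp) }
  rw [Nat.card_congr e, Nat.card_prod]
  congr 1
  simp

/-- The number of labeled `k`-ary trees with `n` nodes is `∏_{j=0}^{n-1} ((k-1)j + 1)`. -/
theorem labeledKTree_card (k n : ℕ) (hk : 1 ≤ k) :
    {t : KTree | IsLabeledKTree k n t}.ncard
      = ∏ j ∈ Finset.range n, ((k - 1) * j + 1) := by
  induction n with
  | zero =>
    have hset : {t : KTree | IsLabeledKTree k 0 t} = {KTree.leaf} := by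
      ext t
      simp only [Set.mem_setOf_eq, Set.mem_singleton_iff]
      constructor
      · rintro ⟨_, hp, _⟩
        refine KTree.labels_eq_nil ?_
        simpa using (List.perm_nil.1 (by simpa using hp))
      · rintro rfl
        exact ⟨.leaf, by simp, .leaf⟩
    rw [hset]
    simp
  | succ n ih =>
    rw [← Nat.card_coe_set_eq] at ih ⊢
    rw [Finset.prod_range_succ, ← ih]
    exact step_card k n hk
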